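/- For every integer ℓ ≥ 1 and every integer n ≥ 2ℓ, the (n+1)-st prime satisfies p_{n+1}^ℓ < p₁·p₂⋯pₙ, where pᵢ denotes the i-th prime. -/

import Mathlib

set_option maxRecDepth 10000

open Finset

namespace Stmt7



/-- central binomial coefficient is at most `(2m)^π'(2m+1)` -/
lemma centralBinom_le_pow_count (m : ℕ) (hm : 1 ≤ m) :
    Nat.centralBinom m ≤ (2 * m) ^ (Nat.count Nat.Prime (2 * m + 1)) := by
  calc Nat.centralBinom m
      = ∏ p ∈ range (2 * m + 1), p ^ (Nat.centralBinom m).factorization p :=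
        (Nat.prod_pow_factorization_centralBinom m).symm
    _ ≤ ∏ p ∈ range (2 * m + 1), (if p.Prime then 2 * m else 1) := by
        apply Finset.prod_le_prod'
        intro p _
        by_cases hp : p.Prime
        · simp only [hp, if_true]
          exact Nat.pow_factorization_choose_le (by omega)
        · simp [hp, Nat.factorization_eq_zero_of_not_prime _ hp]
    _ = ∏ p ∈ (range (2 * m + 1)).filter Nat.Prime, (2 * m) := (Finset.prod_filter _ _).symm
    _ = (2 * m) ^ ((range (2 * m + 1)).filter Nat.Prime).card := Finset.prod_const _
    _ = (2 * m) ^ (Nat.count Nat.Prime (2 * m + 1)) := by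
        rw [Nat.count_eq_card_filter_range]

lemma nth_prime_le_of_pow (m n : ℕ) (hm : 4 ≤ m) (h : (2 * m) ^ (n + 1) ≤ 4 ^ m) :
    Nat.nth Nat.Prime n ≤ 2 * m := by
  have h4 : 4 ^ m < m * Nat.centralBinom m := Nat.four_pow_lt_mul_centralBinom m hm
  have h5 : m * Nat.centralBinom m ≤ (2 * m) ^ (Nat.count Nat.Prime (2 * m + 1) + 1) := by
    calc m * Nat.centralBinom m ≤ (2 * m) * (2 * m) ^ (Nat.count Nat.Prime (2 * m + 1)) :=
          Nat.mul_le_mul (by omega) (centralBinom_le_pow_count m (by omega))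
      _ = (2 * m) ^ (Nat.count Nat.Prime (2 * m + 1) + 1) := by ring
  have h6 : (2 * m) ^ (n + 1) < (2 * m) ^ (Nat.count Nat.Prime (2 * m + 1) + 1) :=
    lt_of_le_of_lt h (lt_of_lt_of_le h4 h5)
  have h7 : n + 1 < Nat.count Nat.Prime (2 * m + 1) + 1 :=
    (Nat.pow_lt_pow_iff_right (by omega)).mp h6
  have h8 : Nat.nth Nat.Prime n < 2 * m + 1 := Nat.nth_lt_of_lt_count (by omega)
  omega

/-- Chebyshev-type explicit upper bound for the nth prime. -/
lemma nth_prime_upper (n : ℕ) (hn : 1 ≤ n) :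
    Nat.nth Nat.Prime n ≤ 2 * ((n + 1) * (Nat.log 2 n + 2)) := by
  set L := Nat.log 2 n with hL
  set t := L + 2 with ht
  have hn2 : n + 1 ≤ 2 ^ (L + 1) := (Nat.lt_pow_succ_log_self (by norm_num) n)
  have htt : t ≤ 2 ^ t := (Nat.lt_two_pow_self (n := t)).le
  have key : 2 * ((n + 1) * t) ≤ 4 ^ t := by
    calc 2 * ((n + 1) * t) ≤ 2 * (2 ^ (L + 1) * t) := by
          exact Nat.mul_le_mul_left _ (Nat.mul_le_mul_right _ hn2)
      _ = 2 ^ t * t := by rw [ht]; ring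
      _ ≤ 2 ^ t * 2 ^ t := Nat.mul_le_mul_left _ htt
      _ = 4 ^ t := by rw [← pow_add]; rw [show (4:ℕ) = 2^2 by norm_num, ← pow_mul]; ring_nf
  apply nth_prime_le_of_pow
  · have : 2 * 2 ≤ (n + 1) * t := Nat.mul_le_mul (by omega) (by omega)
    omega
  · calc (2 * ((n + 1) * t)) ^ (n + 1) ≤ (4 ^ t) ^ (n + 1) := Nat.pow_le_pow_left key _
      _ = 4 ^ ((n + 1) * t) := by rw [← pow_mul, Nat.mul_comm]




lemma nth_eq_of_count (v k : ℕ) (hv : Nat.Prime v) (hc : Nat.count Nat.Prime v = k) :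
    Nat.nth Nat.Prime k = v := by
  have h := Nat.nth_count hv
  rwa [hc] at h

lemma q0 : Nat.nth Nat.Prime 0 = 2 := Nat.nth_prime_zero_eq_two
lemma q1 : Nat.nth Nat.Prime 1 = 3 := nth_eq_of_count 3 1 (by norm_num) (by decide)
lemma q2 : Nat.nth Nat.Prime 2 = 5 := nth_eq_of_count 5 2 (by norm_num) (by decide)
lemma q3 : Nat.nth Nat.Prime 3 = 7 := nth_eq_of_count 7 3 (by norm_num) (by decide)
lemma q4 : Nat.nth Nat.Prime 4 = 11 := nth_eq_of_count 11 4 (by norm_num) (by decide)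

lemma qmono : StrictMono (Nat.nth Nat.Prime) := Nat.nth_strictMono Nat.infinite_setOf_prime

lemma qprime (n : ℕ) : Nat.Prime (Nat.nth Nat.Prime n) := Nat.prime_nth_prime n

lemma q_ge_5 (j : ℕ) (hj : 2 ≤ j) : 5 ≤ Nat.nth Nat.Prime j := by
  have := qmono.monotone hj
  rwa [q2] at this

lemma odd_mod (p : ℕ) (hp : Nat.Prime p) (h5 : 5 ≤ p) : p % 2 = 1 ∧ p % 3 ≠ 0 := by
  constructor
  · have := hp.eq_one_or_self_of_dvd 2
    rcases Nat.even_or_odd p with he | ho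
    · exfalso
      have : (2 : ℕ) ∣ p := he.two_dvd
      have := (Nat.prime_dvd_prime_iff_eq (by norm_num) hp).mp this
      omega
    · omega
  · intro h3
    have : (3 : ℕ) ∣ p := Nat.dvd_of_mod_eq_zero h3
    have := (Nat.prime_dvd_prime_iff_eq (by norm_num) hp).mp this
    omega

/-- gap lemma: `p_{j+2} ≥ p_j + 6` for `j ≥ 2`. -/
lemma gap (j : ℕ) (hj : 2 ≤ j) : Nat.nth Nat.Prime j + 6 ≤ Nat.nth Nat.Prime (j + 2) := by
  set a := Nat.nth Nat.Prime j with ha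
  set b := Nat.nth Nat.Prime (j + 1) with hb
  set c := Nat.nth Nat.Prime (j + 2) with hc
  have hab : a < b := qmono (by omega)
  have hbc : b < c := qmono (by omega)
  have h5a : 5 ≤ a := q_ge_5 j hj
  obtain ⟨ha2, ha3⟩ := odd_mod a (qprime j) h5a
  obtain ⟨hb2, hb3⟩ := odd_mod b (qprime (j + 1)) (by omega)
  obtain ⟨hc2, hc3⟩ := odd_mod c (qprime (j + 2)) (by omega)
  by_contra hcon
  have hb' : b = a + 2 := by omega
  have hc' : c = a + 4 := by omega
  rw [hb'] at hb3
  rw [hc'] at hc3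
  have h1 : a % 3 = 1 ∨ a % 3 = 2 := by omega
  rcases h1 with h1 | h1
  · obtain ⟨k, hk⟩ : ∃ k, a = 3 * k + 1 := ⟨a / 3, by omega⟩
    rw [hk] at hb3
    apply hb3
    omega
  · obtain ⟨k, hk⟩ : ∃ k, a = 3 * k + 2 := ⟨a / 3, by omega⟩
    rw [hk] at hc3
    apply hc3
    omega

lemma prime_lower : ∀ j, 2 ≤ j → 3 * j ≤ Nat.nth Nat.Prime j + 2 := by
  intro j
  induction j using Nat.strong_induction_on with
  | _ j ih =>
    intro hj
    match j, hj with
    | 2, _ => rw [q2]; omega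
    | 3, _ => rw [q3]
    | (k + 4), _ =>
      have h1 := ih (k + 2) (by omega) (by omega)
      have h2 := gap (k + 2) (by omega)
      rw [show k + 2 + 2 = k + 4 from by omega] at h2
      omega

/-- primorial lower bound -/
lemma primorial_lower (n : ℕ) (hn : 2 ≤ n) :
    6 * (3 ^ (n - 2) * Nat.factorial (n - 2)) ≤ ∏ j ∈ range n, Nat.nth Nat.Prime j := by
  have hsplit : (∏ j ∈ Ico 0 2, Nat.nth Nat.Prime j) * ∏ j ∈ Ico 2 n, Nat.nth Nat.Prime j
      = ∏ j ∈ Ico 0 n, Nat.nth Nat.Prime j := Finset.prod_Ico_consecutive _ (by omega) hn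
  have h02 : (∏ j ∈ Ico 0 2, Nat.nth Nat.Prime j) = 6 := by
    show (∏ j ∈ range 2, Nat.nth Nat.Prime j) = 6
    rw [Finset.prod_range_succ, Finset.prod_range_one, q0, q1]
    norm_num
  have hterm : ∀ j ∈ Ico 2 n, 3 * (j - 1) ≤ Nat.nth Nat.Prime j := by
    intro j hj
    rw [Finset.mem_Ico] at hj
    have := prime_lower j hj.1
    omega
  have hprod : ∏ j ∈ Ico 2 n, (3 * (j - 1)) ≤ ∏ j ∈ Ico 2 n, Nat.nth Nat.Prime j :=
    Finset.prod_le_prod' hterm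
  have heval : ∏ j ∈ Ico 2 n, (3 * (j - 1)) = 3 ^ (n - 2) * Nat.factorial (n - 2) := by
    rw [Finset.prod_mul_distrib, Finset.prod_const, Nat.card_Ico]
    congr 1
    rw [Finset.prod_Ico_eq_prod_range]
    have : ∀ i ∈ range (n - 2), (2 + i - 1) = i + 1 := by intro i _; omega
    rw [Finset.prod_congr rfl this, Finset.prod_range_add_one_eq_factorial]
  calc 6 * (3 ^ (n - 2) * Nat.factorial (n - 2)) = 6 * ∏ j ∈ Ico 2 n, (3 * (j - 1)) := by rw [heval]
    _ ≤ 6 * ∏ j ∈ Ico 2 n, Nat.nth Nat.Prime j := Nat.mul_le_mul_left _ hprod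
    _ = ∏ j ∈ range n, Nat.nth Nat.Prime j := by
        rw [Finset.range_eq_Ico, ← hsplit, h02]





/-- geometric-type bound: if `2^j * t j ≤ M` for all `j < m`, then `∑ t ≤ 2M`. -/
lemma geo_sum (t : ℕ → ℕ) (M : ℕ) :
    ∀ m, (∀ j, j < m → 2 ^ j * t j ≤ M) → ∑ j ∈ range m, t j ≤ 2 * M := by
  have key : ∀ m, (∀ j, j < m → 2 ^ j * t j ≤ M) →
      2 ^ m * (∑ j ∈ range m, t j) + 2 * M ≤ 2 ^ (m + 1) * M := by
    intro m
    induction m with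
    | zero => intro _; simp
    | succ m ih =>
      intro h
      have ihm := ih (fun j hj => h j (by omega))
      have hm := h m (by omega)
      rw [Finset.sum_range_succ, Nat.mul_add, pow_succ]
      have h1 : 2 ^ m * 2 * t m ≤ 2 * M := by
        calc 2 ^ m * 2 * t m = 2 * (2 ^ m * t m) := by ring
          _ ≤ 2 * M := by omega
      have h2 : 2 ^ m * 2 * (∑ j ∈ range m, t j) + 2 * (2 * M) ≤ 2 * (2 ^ (m + 1) * M) := by
        calc 2 ^ m * 2 * (∑ j ∈ range m, t j) + 2 * (2 * M)
            = 2 * (2 ^ m * (∑ j ∈ range m, t j) + 2 * M) := by ring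
          _ ≤ 2 * (2 ^ (m + 1) * M) := Nat.mul_le_mul_left _ ihm
      have : (2:ℕ) * (2 ^ (m + 1) * M) = 2 ^ (m + 1 + 1) * M := by ring
      omega
  intro m h
  have := key m h
  have h2 : 2 ^ m * (∑ j ∈ range m, t j) ≤ 2 ^ m * (2 * M) := by
    have : (2:ℕ) ^ (m + 1) * M = 2 ^ m * (2 * M) := by ring
    omega
  exact Nat.le_of_mul_le_mul_left h2 (Nat.pow_pos (n := m) (by norm_num))

lemma two_pow_le_two_mul_factorial : ∀ j : ℕ, 2 ^ j ≤ 2 * Nat.factorial j := by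
  intro j
  induction j with
  | zero => simp
  | succ j ih =>
    rw [pow_succ, Nat.factorial_succ]
    rcases Nat.eq_zero_or_pos j with rfl | hj
    · norm_num
    · calc 2 ^ j * 2 ≤ 2 * Nat.factorial j * 2 := Nat.mul_le_mul_right _ ih
        _ = 2 * (2 * Nat.factorial j) := by ring
        _ ≤ 2 * ((j + 1) * Nat.factorial j) := by
            apply Nat.mul_le_mul_left
            exact Nat.mul_le_mul_right _ (by omega)

/-- `(a+1)^a ≤ 3 * a^a` -/
lemma succ_pow_le (a : ℕ) : (a + 1) ^ a ≤ 3 * a ^ a := by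
  rcases Nat.eq_zero_or_pos a with rfl | ha
  · norm_num
  have hexp : ((a : ℕ) + 1) ^ a = ∑ k ∈ range (a + 1), a ^ k * Nat.choose a k := by
    have h := add_pow (a : ℕ) 1 a
    simpa using h
  have hrefl : ∑ k ∈ range (a + 1), a ^ k * Nat.choose a k
      = ∑ j ∈ range (a + 1), a ^ (a - j) * Nat.choose a j := by
    rw [← Finset.sum_range_reflect]
    apply Finset.sum_congr rfl
    intro j hj
    rw [Finset.mem_range] at hj
    have hj' : j ≤ a := by omega
    rw [show a + 1 - 1 - j = a - j from by omega, Nat.choose_symm hj']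
  have hsplit : ∑ j ∈ range (a + 1), a ^ (a - j) * Nat.choose a j
      = (∑ j ∈ range a, a ^ (a - (j + 1)) * Nat.choose a (j + 1)) + a ^ a := by
    rw [Finset.sum_range_succ']
    simp
  have htail : (∑ j ∈ range a, a ^ (a - (j + 1)) * Nat.choose a (j + 1)) ≤ 2 * a ^ a := by
    apply geo_sum
    intro j hj
    have h1 : 2 ^ j ≤ Nat.factorial (j + 1) := by
      have ha := two_pow_le_two_mul_factorial (j + 1)
      have hb : (2:ℕ) ^ (j + 1) = 2 * 2 ^ j := by rw [pow_succ]; ring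
      omega
    have h2 : Nat.factorial (j + 1) * Nat.choose a (j + 1) ≤ a ^ (j + 1) := by
      rw [← Nat.descFactorial_eq_factorial_mul_choose]
      exact Nat.descFactorial_le_pow _ _
    calc 2 ^ j * (a ^ (a - (j + 1)) * Nat.choose a (j + 1))
        ≤ Nat.factorial (j + 1) * (a ^ (a - (j + 1)) * Nat.choose a (j + 1)) :=
          Nat.mul_le_mul_right _ h1
      _ = (Nat.factorial (j + 1) * Nat.choose a (j + 1)) * a ^ (a - (j + 1)) := by ring
      _ ≤ a ^ (j + 1) * a ^ (a - (j + 1)) := Nat.mul_le_mul_right _ h2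
      _ = a ^ a := by rw [← pow_add]; congr 1; omega
  calc (a + 1) ^ a = (∑ j ∈ range a, a ^ (a - (j + 1)) * Nat.choose a (j + 1)) + a ^ a := by
        rw [hexp, hrefl, hsplit]
    _ ≤ 2 * a ^ a + a ^ a := by omega
    _ = 3 * a ^ a := by ring

/-- `a^a ≤ 3^a * a!` -/
lemma self_pow_le (a : ℕ) : a ^ a ≤ 3 ^ a * Nat.factorial a := by
  induction a with
  | zero => simp
  | succ a ih =>
    calc (a + 1) ^ (a + 1) = (a + 1) ^ a * (a + 1) := by rw [pow_succ]
      _ ≤ 3 * a ^ a * (a + 1) := Nat.mul_le_mul_right _ (succ_pow_le a)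
      _ ≤ 3 * (3 ^ a * Nat.factorial a) * (a + 1) := by
          apply Nat.mul_le_mul_right
          exact Nat.mul_le_mul_left _ ih
      _ = 3 ^ (a + 1) * ((a + 1) * Nat.factorial a) := by ring
      _ = 3 ^ (a + 1) * Nat.factorial (a + 1) := by rw [Nat.factorial_succ]

/-- `(n+1)^2 ≤ 2^(n-5)` for `n ≥ 13` -/
lemma sq_le_two_pow : ∀ n, 13 ≤ n → (n + 1) ^ 2 ≤ 2 ^ (n - 5) := by
  intro n
  induction n using Nat.strong_induction_on with
  | _ n ih =>
    intro hn
    rcases Nat.lt_or_ge n 14 with h | h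
    · interval_cases n
      · norm_num
    · have h1 := ih (n - 1) (by omega) (by omega)
      have h2 : (n + 1) ^ 2 ≤ 2 * n ^ 2 := by nlinarith
      have h3 : (2:ℕ) ^ (n - 5) = 2 * 2 ^ (n - 1 - 5) := by
        rw [← pow_succ']
        congr 1
        omega
      have h4 : (n - 1 + 1) = n := by omega
      rw [h4] at h1
      calc (n + 1) ^ 2 ≤ 2 * n ^ 2 := h2
        _ ≤ 2 * 2 ^ (n - 1 - 5) := Nat.mul_le_mul_left _ h1
        _ = 2 ^ (n - 5) := h3.symm

/-- `(k+1)^3 ≤ 2^(k-2)` for `k ≥ 17` -/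
lemma cube_le_two_pow : ∀ k, 17 ≤ k → (k + 1) ^ 3 ≤ 2 ^ (k - 2) := by
  intro k
  induction k using Nat.strong_induction_on with
  | _ k ih =>
    intro hk
    rcases Nat.lt_or_ge k 18 with h | h
    · interval_cases k
      · norm_num
    · have h1 := ih (k - 1) (by omega) (by omega)
      have h2 : (k + 1) ^ 3 ≤ 2 * k ^ 3 := by
        nlinarith [Nat.mul_le_mul_right (k * k) h, Nat.mul_le_mul_right k h]
      have h3 : (2:ℕ) ^ (k - 2) = 2 * 2 ^ (k - 1 - 2) := by
        rw [← pow_succ']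
        congr 1
        omega
      have h4 : (k - 1 + 1) = k := by omega
      rw [h4] at h1
      calc (k + 1) ^ 3 ≤ 2 * k ^ 3 := h2
        _ ≤ 2 * 2 ^ (k - 1 - 2) := Nat.mul_le_mul_left _ h1
        _ = 2 ^ (k - 2) := h3.symm

/-- `(L+2)^2 ≤ 2^L` for `L ≥ 7` -/
lemma logsq_le_two_pow : ∀ L, 7 ≤ L → (L + 2) ^ 2 ≤ 2 ^ L := by
  intro L
  induction L using Nat.strong_induction_on with
  | _ L ih =>
    intro hL
    rcases Nat.lt_or_ge L 8 with h | h
    · interval_cases L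
      · norm_num
    · have h1 := ih (L - 1) (by omega) (by omega)
      have h2 : (L + 2) ^ 2 ≤ 2 * (L + 1) ^ 2 := by nlinarith
      have h3 : (2:ℕ) ^ L = 2 * 2 ^ (L - 1) := by
        rw [← pow_succ']
        congr 1
        omega
      have h4 : (L - 1 + 2) = L + 1 := by omega
      rw [h4] at h1
      calc (L + 2) ^ 2 ≤ 2 * (L + 1) ^ 2 := h2
        _ ≤ 2 * 2 ^ (L - 1) := Nat.mul_le_mul_left _ h1
        _ = 2 ^ L := h3.symm






lemma q_le_of_count (n w : ℕ) (h : n < Nat.count Nat.Prime (w + 1)) :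
    Nat.nth Nat.Prime n ≤ w := by
  have := Nat.nth_lt_of_lt_count h
  omega

lemma window (n w : ℕ) (hn2 : 2 ≤ n) (hq : Nat.nth Nat.Prime n ≤ w)
    (hnum : w ^ (n / 2) < 6 * (3 ^ (n - 2) * Nat.factorial (n - 2))) :
    Nat.nth Nat.Prime n ^ (n / 2) < ∏ j ∈ range n, Nat.nth Nat.Prime j :=
  calc Nat.nth Nat.Prime n ^ (n / 2) ≤ w ^ (n / 2) := Nat.pow_le_pow_left hq _
    _ < 6 * (3 ^ (n - 2) * Nat.factorial (n - 2)) := hnum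
    _ ≤ ∏ j ∈ range n, Nat.nth Nat.Prime j := primorial_lower n hn2

lemma main_aux (n : ℕ) (hn : 2 ≤ n) :
    Nat.nth Nat.Prime n ^ (n / 2) < ∏ j ∈ range n, Nat.nth Nat.Prime j := by
  rcases Nat.lt_or_ge n 38 with hsmall | hbig
  · -- base cases
    rcases Nat.lt_or_ge n 5 with h5 | h5
    · interval_cases n
      · rw [q2, Finset.prod_range_succ, Finset.prod_range_one, q0, q1]
        norm_num
      · rw [q3, Finset.prod_range_succ, Finset.prod_range_succ, Finset.prod_range_one,
          q0, q1, q2]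
        norm_num
      · rw [q4, Finset.prod_range_succ, Finset.prod_range_succ, Finset.prod_range_succ,
          Finset.prod_range_one, q0, q1, q2, q3]
        norm_num
    · have c18 : Nat.count Nat.Prime (17 + 1) = 7 := by decide
      have c24 : Nat.count Nat.Prime (23 + 1) = 9 := by decide
      have c48 : Nat.count Nat.Prime (47 + 1) = 15 := by decide
      have c164 : Nat.count Nat.Prime (163 + 1) = 38 := by decide
      rcases Nat.lt_or_ge n 7 with h7 | h7
      · refine window n 17 hn (q_le_of_count n 17 (by omega)) ?_
        interval_cases n <;> norm_num [Nat.factorial]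
      rcases Nat.lt_or_ge n 9 with h9 | h9
      · refine window n 23 hn (q_le_of_count n 23 (by omega)) ?_
        interval_cases n <;> norm_num [Nat.factorial]
      rcases Nat.lt_or_ge n 15 with h15 | h15
      · refine window n 47 hn (q_le_of_count n 47 (by omega)) ?_
        interval_cases n <;> norm_num [Nat.factorial]
      · refine window n 163 hn (q_le_of_count n 163 (by omega)) ?_
        interval_cases n <;> norm_num [Nat.factorial]
  · -- asymptotic case
    obtain ⟨a, rfl⟩ : ∃ a, n = a + 2 := ⟨n - 2, by omega⟩
    have ha : 36 ≤ a := by omega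
    set n := a + 2 with hdefn
    set L := Nat.log 2 n with hLdef
    set B := 2 * ((n + 1) * (L + 2)) with hBdef
    have hB : Nat.nth Nat.Prime n ≤ B := nth_prime_upper n (by omega)
    have hBpos : 0 < B := by positivity
    have cond1 : 2 * B ≤ a ^ 2 := by
      rcases Nat.lt_or_ge n 128 with hc | hc
      · have hL6 : L ≤ 6 := by
          have := Nat.log_lt_of_lt_pow (b := 2) (x := 7) (by omega : n ≠ 0) (by norm_num; omega)
          omega
        have h1 : (n + 1) * (L + 2) ≤ (n + 1) * 8 := Nat.mul_le_mul_left _ (by omega)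
        have h2 : 36 * a ≤ a * a := Nat.mul_le_mul_right a ha
        have h3 : a ^ 2 = a * a := sq a
        omega
      · have hL7 : 7 ≤ L := by
          rw [hLdef]
          exact (Nat.le_log_iff_pow_le (by norm_num) (by omega)).mpr (by norm_num; omega)
        have hx : (L + 2) ^ 2 ≤ n := le_trans (logsq_le_two_pow L hL7)
          (Nat.pow_log_le_self 2 (by omega))
        have h9x : 9 * (L + 2) ≤ (L + 2) * (L + 2) := Nat.mul_le_mul_right _ (by omega)
        have hxn : 9 * (L + 2) ≤ n := by
          have : (L + 2) * (L + 2) = (L + 2) ^ 2 := (sq (L + 2)).symm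
          omega
        -- 9 * (2 * B) = 4*(n+1)*(9*(L+2)) ≤ 4*(n+1)*n ≤ 9 * a^2
        have h5 : 9 * (2 * B) ≤ 4 * (n + 1) * n := by
          calc 9 * (2 * B) = 4 * (n + 1) * (9 * (L + 2)) := by rw [hBdef]; ring
            _ ≤ 4 * (n + 1) * n := Nat.mul_le_mul_left _ hxn
        have h6 : 4 * (n + 1) * n ≤ 9 * a ^ 2 := by
          rw [hdefn]
          nlinarith [Nat.mul_le_mul_right a ha]
        exact Nat.le_of_mul_le_mul_left (by omega : 9 * (2 * B) ≤ 9 * a ^ 2) (by norm_num)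
    have cond2 : B ^ 2 < 36 * 2 ^ a := by
      have h2apos : (0:ℕ) < 2 ^ a := Nat.pow_pos (n := a) (by norm_num)
      rcases Nat.lt_or_ge n 128 with hc | hc
      · have hL6 : L ≤ 6 := by
          have := Nat.log_lt_of_lt_pow (b := 2) (x := 7) (by omega : n ≠ 0) (by norm_num; omega)
          omega
        have h1 : B ≤ 16 * (n + 1) := by
          have : (n + 1) * (L + 2) ≤ (n + 1) * 8 := Nat.mul_le_mul_left _ (by omega)
          omega
        have h2 : B ^ 2 ≤ (16 * (n + 1)) ^ 2 := Nat.pow_le_pow_left h1 2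
        have h3 : (n + 1) ^ 2 ≤ 2 ^ (n - 5) := sq_le_two_pow n (by omega)
        have h4 : (16 * (n + 1)) ^ 2 = 256 * (n + 1) ^ 2 := by ring
        have h5 : (256 : ℕ) * (n + 1) ^ 2 ≤ 256 * 2 ^ (n - 5) := Nat.mul_le_mul_left _ h3
        have h6 : (256 : ℕ) * 2 ^ (n - 5) = 32 * 2 ^ a := by
          have : (2:ℕ) ^ a = 2 ^ (n - 5) * 2 ^ 3 := by
            rw [← pow_add]
            congr 1
            omega
          rw [this]
          ring
        have h7 : (2:ℕ) ^ a ≥ 1 := h2apos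
        omega
      · have hx : (L + 2) ^ 2 ≤ n := by
          have hL7 : 7 ≤ L := by
            rw [hLdef]
            exact (Nat.le_log_iff_pow_le (by norm_num) (by omega)).mpr (by norm_num; omega)
          exact le_trans (logsq_le_two_pow L hL7) (Nat.pow_log_le_self 2 (by omega))
        have h1 : B ^ 2 = 4 * (n + 1) ^ 2 * (L + 2) ^ 2 := by rw [hBdef]; ring
        have h2 : B ^ 2 ≤ 4 * (n + 1) ^ 2 * n := by
          rw [h1]
          exact Nat.mul_le_mul_left _ hx
        have h3 : 4 * (n + 1) ^ 2 * n ≤ 4 * (n + 1) ^ 3 := by nlinarith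
        have h4 : (n + 1) ^ 3 ≤ 2 ^ (n - 2) := cube_le_two_pow n (by omega)
        have h5 : n - 2 = a := by omega
        rw [h5] at h4
        have : 4 * (n + 1) ^ 3 ≤ 4 * 2 ^ a := Nat.mul_le_mul_left _ h4
        omega
    -- core chain
    have hq2 : 2 ≤ Nat.nth Nat.Prime n := (qprime n).two_le
    clear_value B L n
    have hchain1 : Nat.nth Nat.Prime n ^ (n / 2) * Nat.nth Nat.Prime n ^ (n / 2) ≤ B ^ n := by
      rw [← pow_add]
      calc Nat.nth Nat.Prime n ^ (n / 2 + n / 2) ≤ Nat.nth Nat.Prime n ^ n :=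
            Nat.pow_le_pow_right (by omega) (by omega)
        _ ≤ B ^ n := Nat.pow_le_pow_left hB n
    set P : ℕ := ∏ j ∈ range n, Nat.nth Nat.Prime j with hPdef
    have hP : 6 * (3 ^ a * Nat.factorial a) ≤ P := by
      have := primorial_lower n (by omega)
      have h5 : n - 2 = a := by omega
      rwa [h5] at this
    have hchain2 : B ^ n < P * P := by
      have e1 : B ^ n = B ^ a * B ^ 2 := by
        rw [← pow_add, show a + 2 = n from hdefn.symm]
      have e2 : B ^ a * B ^ 2 < B ^ a * (36 * 2 ^ a) :=
        mul_lt_mul_of_pos_left cond2 (pow_pos hBpos a)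
      have e3 : B ^ a * (36 * 2 ^ a) = 36 * (2 * B) ^ a := by
        rw [mul_pow]
        ring
      have e4 : (2 * B) ^ a ≤ (a ^ 2) ^ a := Nat.pow_le_pow_left cond1 a
      have e5 : (a ^ 2) ^ a = a ^ a * a ^ a := by
        rw [← pow_mul, two_mul, pow_add]
      have e6 : 36 * ((a ^ 2) ^ a) ≤ (6 * (3 ^ a * Nat.factorial a)) * (6 * (3 ^ a * Nat.factorial a)) := by
        rw [e5]
        calc 36 * (a ^ a * a ^ a) = (6 * a ^ a) * (6 * a ^ a) := by ring
          _ ≤ (6 * (3 ^ a * Nat.factorial a)) * (6 * (3 ^ a * Nat.factorial a)) :=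
              Nat.mul_le_mul (Nat.mul_le_mul_left _ (self_pow_le a))
                (Nat.mul_le_mul_left _ (self_pow_le a))
      calc B ^ n = B ^ a * B ^ 2 := e1
        _ < B ^ a * (36 * 2 ^ a) := e2
        _ = 36 * (2 * B) ^ a := e3
        _ ≤ 36 * ((a ^ 2) ^ a) := Nat.mul_le_mul_left _ e4
        _ ≤ (6 * (3 ^ a * Nat.factorial a)) * (6 * (3 ^ a * Nat.factorial a)) := e6
        _ ≤ P * P := Nat.mul_le_mul hP hP
    by_contra hcon
    push_neg at hcon
    have : P * P ≤ Nat.nth Nat.Prime n ^ (n / 2) * Nat.nth Nat.Prime n ^ (n / 2) :=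
      Nat.mul_le_mul hcon hcon
    have hlt : P * P < P * P := lt_of_le_of_lt (le_trans this hchain1) hchain2
    exact lt_irrefl _ hlt


end Stmt7

theorem stmt7 (ℓ n : ℕ) (hℓ : 1 ≤ ℓ) (hn : 2 * ℓ ≤ n) :
    (Nat.nth Nat.Prime n) ^ ℓ < ∏ j ∈ Finset.range n, Nat.nth Nat.Prime j := by
  have hn2 : 2 ≤ n := by omega
  have h := Stmt7.main_aux n hn2
  calc (Nat.nth Nat.Prime n) ^ ℓ ≤ (Nat.nth Nat.Prime n) ^ (n / 2) :=
        Nat.pow_le_pow_right (by have := (Stmt7.qprime n).two_le; omega) (by omega)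
    _ < _ := h
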